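/- The function V₅ is not the sum of a nonnegative function and a positive definite function on ℤ/5ℤ: there do not exist f, g : ZMod 5 → ℝ such that f n ≥ 0 for all n, g is positive definite, and V₅ = f + g. -/
import Mathlib
open Finset
open scoped ComplexOrder

/-- The potential `V₅` on `ZMod 5`: `V₅ 0 = V₅ 2 = V₅ 3 = 1`, `V₅ 1 = V₅ 4 = -1`. -/
def V₅ : ZMod 5 → ℝ := fun n => if n = 1 ∨ n = 4 then -1 else 1

/-- A real-valued function on an additive abelian group is positive definite if all its
"quadratic forms" with complex coefficients are real and nonnegative. -/
def IsPosDef {G : Type*} [AddCommGroup G] (g : G → ℝ) : Prop :=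
  ∀ (N : ℕ) (x : Fin N → G) (c : Fin N → ℂ),
    0 ≤ ∑ i, ∑ j, c i * (starRingEnd ℂ) (c j) * (g (x i - x j) : ℂ)

set_option maxHeartbeats 1000000 in
theorem V₅_not_decomposable :
    ¬ ∃ f g : ZMod 5 → ℝ, (∀ n, 0 ≤ f n) ∧ IsPosDef g ∧ V₅ = f + g := by
  rintro ⟨f, g, hf, hg, hV⟩
  set t : ℝ := (Real.sqrt 5 - 1) / 4 with ht
  set s : ℝ := -((Real.sqrt 5 + 1) / 4) with hs
  have hsq : Real.sqrt 5 ^ 2 = 5 := Real.sq_sqrt (by norm_num)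
  have hs2 : (2:ℝ) ≤ Real.sqrt 5 := by nlinarith [Real.sqrt_nonneg 5]
  have hgV : ∀ n, g n = V₅ n - f n := by
    intro n
    have := congrFun hV n
    simp only [Pi.add_apply] at this
    linarith
  have hA := hg 5 ![0,1,2,3,4] (fun _ => 1)
  have hB := hg 5 ![0,1,2,3,4] ![(1:ℝ), t, s, s, t]
  simp only [Fin.sum_univ_five, Matrix.cons_val_zero, Matrix.cons_val_one, Matrix.head_cons,
    Matrix.cons_val_two, Matrix.tail_cons, Matrix.cons_val_three, Matrix.cons_val_four,
    show (0:ZMod 5)-1=4 by decide, show (0:ZMod 5)-2=3 by decide, show (0:ZMod 5)-3=2 by decide,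
    show (0:ZMod 5)-4=1 by decide, show (1:ZMod 5)-2=4 by decide, show (1:ZMod 5)-3=3 by decide,
    show (1:ZMod 5)-4=2 by decide, show (2:ZMod 5)-3=4 by decide, show (2:ZMod 5)-4=3 by decide,
    show (3:ZMod 5)-4=4 by decide, show (2:ZMod 5)-1=1 by decide, show (3:ZMod 5)-1=2 by decide,
    show (3:ZMod 5)-2=1 by decide, show (4:ZMod 5)-1=3 by decide, show (4:ZMod 5)-2=2 by decide,
    show (4:ZMod 5)-3=1 by decide, sub_self, sub_zero, map_one, mul_one, one_mul,
    Complex.conj_ofReal] at hA hB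
  have hA' : (0:ℝ) ≤ g 0 + g 4 + g 3 + g 2 + g 1 + (g 1 + g 0 + g 4 + g 3 + g 2) +
      (g 2 + g 1 + g 0 + g 4 + g 3) + (g 3 + g 2 + g 1 + g 0 + g 4) +
      (g 4 + g 3 + g 2 + g 1 + g 0) := by exact_mod_cast hA
  have hB' : (0:ℝ) ≤ 1 * 1 * g 0 + 1 * t * g 4 + 1 * s * g 3 + 1 * s * g 2 + 1 * t * g 1 +
      (t * 1 * g 1 + t * t * g 0 + t * s * g 4 + t * s * g 3 + t * t * g 2) +
      (s * 1 * g 2 + s * t * g 1 + s * s * g 0 + s * s * g 4 + s * t * g 3) +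
      (s * 1 * g 3 + s * t * g 2 + s * s * g 1 + s * s * g 0 + s * t * g 4) +
      (t * 1 * g 4 + t * t * g 3 + t * s * g 2 + t * s * g 1 + t * t * g 0) := by
    exact_mod_cast hB
  have hkey : 1 * 1 * g 0 + 1 * t * g 4 + 1 * s * g 3 + 1 * s * g 2 + 1 * t * g 1 +
      (t * 1 * g 1 + t * t * g 0 + t * s * g 4 + t * s * g 3 + t * t * g 2) +
      (s * 1 * g 2 + s * t * g 1 + s * s * g 0 + s * s * g 4 + s * t * g 3) +
      (s * 1 * g 3 + s * t * g 2 + s * s * g 1 + s * s * g 0 + s * t * g 4) +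
      (t * 1 * g 4 + t * t * g 3 + t * s * g 2 + t * s * g 1 + t * t * g 0) =
      (5/2) * g 0 + (5/2) * t * (g 1 + g 4) + (5/2) * s * (g 2 + g 3) := by
    rw [ht, hs]
    linear_combination (g 0 / 4 - (g 1 + g 4) / 16 - (g 2 + g 3) / 16) * hsq
  rw [hkey] at hB'
  have e0 := hgV 0; have e1 := hgV 1; have e2 := hgV 2; have e3 := hgV 3; have e4 := hgV 4
  simp only [V₅, show ¬((0:ZMod 5)=1 ∨ (0:ZMod 5)=4) by decide,
    show ((1:ZMod 5)=1 ∨ (1:ZMod 5)=4) by decide, show ¬((2:ZMod 5)=1 ∨ (2:ZMod 5)=4) by decide,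
    show ¬((3:ZMod 5)=1 ∨ (3:ZMod 5)=4) by decide, show ((4:ZMod 5)=1 ∨ (4:ZMod 5)=4) by decide,
    if_pos, if_neg, if_true, if_false, not_false_iff] at e0 e1 e2 e3 e4
  norm_num at e1 e4
  have h0 := hf 0; have h1 := hf 1; have h2 := hf 2; have h3 := hf 3; have h4 := hf 4
  have hSum : f 2 + f 3 ≤ 1 := by linarith
  have hT : (0:ℝ) ≤ t := by rw [ht]; linarith
  nlinarith [mul_nonneg h1 hT, mul_nonneg h4 hT,
    mul_nonneg (show (0:ℝ) ≤ 1 - (f 2 + f 3) by linarith)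
      (show (0:ℝ) ≤ (Real.sqrt 5 + 1) / 4 by linarith)]
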